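/- (Projection of bony graphs to bi-bony graphs) Let $\lambda$ be a symmetric Markov measure on $\Sigma_A$ with projection $\bar\lambda=\pi_*\lambda$. If $B\subset\Sigma_A\times I$ is a bony graph with respect to $\lambda$ (each fiber slice $B_\omega$ is a single point for $\lambda$-a.e. $\omega$ and an interval in the remaining points), then $\Pi(B)$ is a bi-bony graph with respect to $\bar\lambda$, i.e. the union of the two bony graphs $\Pi|_{C\times I}(B)$ and $\Pi|_{(\Sigma_A\setminus C)\times I}(B)$. Moreover, if $B$ is continuous (the fiber slices vary upper semicontinuously: for all $\omega$ and $\varepsilon>0$ there is $\delta>0$ such that $d(\eta,\omega)<\delta$ implies $B_\eta\subset U_\varepsilon(B_\omega)$), then $\Pi(B)$ is continuous too. -/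

import Mathlib

open Set Filter MeasureTheory Topology

noncomputable section

/-- The base space `Σ_N = {1,…,N}^ℤ`. -/
abbrev BSeq (N : ℕ) := ℤ → Fin N

/-- The shift map on bilateral sequences. -/
def shiftSeq {α : Type*} (ξ : ℤ → α) : ℤ → α := fun n => ξ (n + 1)

/-- The unit interval. -/
def I01 : Set ℝ := Set.Icc 0 1

/-- Forward composition of fiber maps: `fw h ξ n = h (ξ (n-1)) ∘ ⋯ ∘ h (ξ 0)`. -/
def fw {α : Type*} (h : α → ℝ → ℝ) (ξ : ℤ → α) : ℕ → ℝ → ℝ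
  | 0 => id
  | n + 1 => fun p => h (ξ (n : ℤ)) (fw h ξ n p)

/-- The step skew-product `F(ξ,p) = (σξ, f_{ξ₀}(p))`. -/
def Fmap {N : ℕ} (f : Fin N → ℝ → ℝ) (z : BSeq N × ℝ) : BSeq N × ℝ :=
  (shiftSeq z.1, f (z.1 0) z.2)


/-- Doubled symbol set `{1,…,2N}`: `(i, false)` is `i`, `(i, true)` is `i + N`. -/
abbrev DSym (N : ℕ) := Fin N × Bool

/-- `A`-admissibility for the orientation-doubling transition matrix, where
`part i = true` iff `f i` is orientation preserving. -/
def Admissible {N : ℕ} (part : Fin N → Bool) (ω : ℤ → DSym N) : Prop :=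
  ∀ n : ℤ, (ω (n + 1)).2 = xor ((ω n).2) (!(part (ω n).1))

/-- The subshift of finite type `Σ_A` of `A`-admissible bilateral sequences. -/
abbrev SigmaA (N : ℕ) (part : Fin N → Bool) := {ω : ℤ → DSym N // Admissible part ω}

/-- The shift map `σ_A` on `Σ_A`. -/
def shiftA {N : ℕ} {part : Fin N → Bool} (ω : SigmaA N part) : SigmaA N part :=
  ⟨shiftSeq ω.1, fun n => ω.2 (n + 1)⟩

/-- The 2-to-1 projection `π : Σ_A → Σ_N`, `π(ω)_n = ω_n mod N`. -/
def piA {N : ℕ} {part : Fin N → Bool} (ω : SigmaA N part) : BSeq N :=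
  fun n => (ω.1 n).1

/-- The reflection `R(x) = 1 - x`. -/
def R : ℝ → ℝ := fun x => 1 - x

/-- The fiber maps of the extended step skew-product:
`g_i = f_i`, `g_{i+N} = R∘f_i∘R` for orientation-preserving `f_i`, and
`g_i = R∘f_i`, `g_{i+N} = f_i∘R` for orientation-reversing `f_i`. -/
def gmap {N : ℕ} (f : Fin N → ℝ → ℝ) (part : Fin N → Bool) : DSym N → ℝ → ℝ :=
  fun s =>
    if part s.1 then (if s.2 then R ∘ f s.1 ∘ R else f s.1)
    else (if s.2 then f s.1 ∘ R else R ∘ f s.1)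

/-- The extended step skew-product `G(ω,x) = (σ_A ω, g_{ω₀}(x))`. -/
def Gmap {N : ℕ} {part : Fin N → Bool} (f : Fin N → ℝ → ℝ)
    (z : SigmaA N part × ℝ) : SigmaA N part × ℝ :=
  (shiftA z.1, gmap f part (z.1.1 0) z.2)

/-- The 2-to-1 projection `Π : Σ_A × I → Σ_N × I`. -/
def PiMap {N : ℕ} {part : Fin N → Bool} (z : SigmaA N part × ℝ) : BSeq N × ℝ :=
  (piA z.1, if (z.1.1 0).2 then R z.2 else z.2)

/-- Orientation hypothesis: `part` records which fiber maps preserve orientation. -/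
def OrientPart {N : ℕ} (f : Fin N → ℝ → ℝ) (part : Fin N → Bool) : Prop :=
  ∀ i, (part i = true → StrictMonoOn (f i) I01) ∧ (part i = false → StrictAntiOn (f i) I01)

open scoped ENNReal

/-- The cylinder `[m; w₀ … w_k]`. -/
def cylinder {α : Type*} (m : ℤ) (k : ℕ) (w : ℕ → α) : Set (ℤ → α) :=
  {η | ∀ i : ℕ, i ≤ k → η (m + i) = w i}

/-- `lam` is the Markov measure with probability vector `p` and transition matrix `P`. -/
def IsMarkov {α : Type*} [MeasurableSpace α] (lam : MeasureTheory.Measure (ℤ → α))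
    (p : α → ℝ≥0∞) (P : α → α → ℝ≥0∞) : Prop :=
  ∀ (m : ℤ) (k : ℕ) (w : ℕ → α),
    lam (cylinder m k w) = p (w 0) * ∏ i ∈ Finset.range k, P (w i) (w (i + 1))

/-- Stochasticity and stationarity of the pair `(p, P)`. -/
def IsStochastic {α : Type*} [Fintype α] (p : α → ℝ≥0∞) (P : α → α → ℝ≥0∞) : Prop :=
  (∑ a, p a) = 1 ∧ (∀ a, (∑ b, P a b) = 1) ∧ (∀ b, (∑ a, p a * P a b) = p b)

/-- Symmetry of a Markov pair on the doubled alphabet: `p_i = p_{i+N}`,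
`P_{ij} = P_{(i+N)(j+N)}` and `P_{i(j+N)} = P_{(i+N)j}`. -/
def SymMarkov {N : ℕ} (p : DSym N → ℝ≥0∞) (P : DSym N → DSym N → ℝ≥0∞) : Prop :=
  (∀ s : DSym N, p s = p (s.1, !s.2)) ∧
  (∀ s t : DSym N, P s t = P (s.1, !s.2) (t.1, !t.2))

/-- Compatibility of the transition matrix with the admissibility matrix `A`. -/
def CompatA {N : ℕ} (part : Fin N → Bool) (P : DSym N → DSym N → ℝ≥0∞) : Prop :=
  ∀ s t : DSym N, t.2 ≠ xor s.2 (!(part s.1)) → P s t = 0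

/-- Projection of doubled sequences to `Σ_N`. -/
def projSeq {N : ℕ} (ω : ℤ → DSym N) : BSeq N := fun n => (ω n).1

/-- The mirror involution on `Σ_A`, swapping `i ↔ i+N` in each coordinate. -/
def mirrorA {N : ℕ} {part : Fin N → Bool} (ω : SigmaA N part) : SigmaA N part :=
  ⟨fun n => ((ω.1 n).1, !(ω.1 n).2), by
    intro n
    show (!(ω.1 (n + 1)).2) = xor (!(ω.1 n).2) (!(part (ω.1 n).1))
    rw [ω.2 n]
    cases (ω.1 n).2 <;> cases part (ω.1 n).1 <;> rfl⟩

/-- The fiber fslice of a set over a base point. -/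
def fslice {β : Type*} (B : Set (β × ℝ)) (ω : β) : Set ℝ := {x | (ω, x) ∈ B}

/-- A bony graph relative to a measure `lam`: every fslice is a nonempty interval, and
`lam`-almost every fslice is a single point. -/
def IsBony {β : Type*} [MeasurableSpace β] (lam : Measure β) (B : Set (β × ℝ)) : Prop :=
  (∀ ω, (fslice B ω).Nonempty ∧ (fslice B ω).OrdConnected) ∧
  lam {ω | ¬ ∃ x : ℝ, fslice B ω = {x}} = 0

/-- Continuity of a bony graph: fiber slices vary upper semicontinuously. -/
def ContBony {β : Type*} [TopologicalSpace β] (B : Set (β × ℝ)) : Prop :=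
  ∀ ω : β, ∀ ε : ℝ, 0 < ε → ∃ U ∈ nhds ω, ∀ η ∈ U, ∀ y ∈ fslice B η,
    ∃ x ∈ fslice B ω, |y - x| < ε

namespace BonyAux

variable {N : ℕ} (part : Fin N → Bool)

/-- xor-accumulation for nonnegative indices. -/
def accP (ξ : BSeq N) : ℕ → Bool
  | 0 => false
  | k + 1 => xor (accP ξ k) (!(part (ξ (k : ℤ))))

/-- xor-accumulation for negative indices. -/
def accN (ξ : BSeq N) : ℕ → Bool
  | 0 => false
  | k + 1 => xor (accN ξ k) (!(part (ξ (Int.negSucc k))))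

/-- The accumulated parity from position `0` to `n`. -/
def acc (ξ : BSeq N) : ℤ → Bool
  | Int.ofNat k => accP part ξ k
  | Int.negSucc k => accN part ξ (k + 1)

lemma acc_zero (ξ : BSeq N) : acc part ξ 0 = false := rfl

lemma acc_succ (ξ : BSeq N) (n : ℤ) :
    acc part ξ (n + 1) = xor (acc part ξ n) (!(part (ξ n))) := by
  cases n with
  | ofNat k =>
      show acc part ξ (Int.ofNat (k + 1)) = _
      rfl
  | negSucc k =>
      cases k with
      | zero =>
          show acc part ξ 0 = xor (accN part ξ 1) (!(part (ξ (Int.negSucc 0))))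
          show false = xor (xor false (!(part (ξ (Int.negSucc 0))))) (!(part (ξ (Int.negSucc 0))))
          cases part (ξ (Int.negSucc 0)) <;> rfl
      | succ k =>
          show acc part ξ (Int.negSucc k) = xor (accN part ξ (k + 2)) (!(part (ξ (Int.negSucc (k + 1)))))
          show accN part ξ (k+1) = xor (xor (accN part ξ (k+1)) (!(part (ξ (Int.negSucc (k+1)))))) (!(part (ξ (Int.negSucc (k + 1)))))
          cases accN part ξ (k+1) <;> cases part (ξ (Int.negSucc (k+1))) <;> rfl

/-- The lift of `ξ` to `Σ_A` with bit `b` at position `0`. -/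
def liftSeq (b : Bool) (ξ : BSeq N) : SigmaA N part :=
  ⟨fun n => (ξ n, xor b (acc part ξ n)), by
    intro n
    show xor b (acc part ξ (n + 1)) = xor (xor b (acc part ξ n)) (!(part (ξ n)))
    rw [acc_succ, Bool.xor_assoc]⟩

@[simp] lemma piA_liftSeq (b : Bool) (ξ : BSeq N) : piA (liftSeq part b ξ) = ξ := rfl

@[simp] lemma liftSeq_bit0 (b : Bool) (ξ : BSeq N) :
    ((liftSeq part b ξ).1 0).2 = b := by
  show xor b (acc part ξ 0) = b
  rw [acc_zero]; exact Bool.xor_false b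

private lemma xor_cancel {x y c : Bool} (h : xor x c = xor y c) : x = y := by
  cases x <;> cases y <;> cases c <;> simp_all

/-- Every admissible sequence is the lift of its projection. -/
lemma eq_liftSeq (ω : SigmaA N part) :
    ω = liftSeq part ((ω.1 0).2) (piA ω) := by
  apply Subtype.ext
  funext n
  have key : ∀ m : ℤ, (ω.1 m).2 = xor ((ω.1 0).2) (acc part (piA ω) m) := by
    intro m
    induction m using Int.induction_on with
    | zero => rw [acc_zero, Bool.xor_false]
    | succ k ih =>
        rw [ω.2 k, acc_succ, ih, Bool.xor_assoc]
        rfl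
    | pred k ih =>
        have h1 : (ω.1 (-(k:ℤ) - 1 + 1)).2 = xor ((ω.1 (-(k:ℤ)-1)).2) (!(part ((ω.1 (-(k:ℤ)-1)).1))) :=
          ω.2 (-(k:ℤ) - 1)
        have e : (-(k:ℤ) - 1 + 1) = -(k:ℤ) := by ring
        rw [e] at h1
        have h2 : acc part (piA ω) (-(k:ℤ) - 1 + 1)
            = xor (acc part (piA ω) (-(k:ℤ)-1)) (!(part ((ω.1 (-(k:ℤ)-1)).1))) :=
          acc_succ part (piA ω) (-(k:ℤ) - 1)
        rw [e] at h2
        apply xor_cancel (c := !(part ((ω.1 (-(k:ℤ)-1)).1)))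
        rw [← h1, ih, h2, Bool.xor_assoc]
  exact Prod.ext rfl (key n)

lemma liftSeq_eq_self {ω : SigmaA N part} {b : Bool} (h : (ω.1 0).2 = b) :
    liftSeq part b (piA ω) = ω := by
  conv_rhs => rw [eq_liftSeq part ω]
  rw [h]

@[simp] lemma mirrorA_liftSeq (b : Bool) (ξ : BSeq N) :
    mirrorA (liftSeq part b ξ) = liftSeq part (!b) ξ := by
  apply Subtype.ext
  funext n
  refine Prod.ext rfl ?_
  show (!(xor b (acc part ξ n))) = xor (!b) (acc part ξ n)
  cases b <;> cases acc part ξ n <;> rfl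

lemma liftSeq_eq_mirror {ω : SigmaA N part} {b : Bool} (h : (ω.1 0).2 = !b) :
    liftSeq part b (piA ω) = mirrorA ω := by
  conv_rhs => rw [eq_liftSeq part ω]
  rw [h, mirrorA_liftSeq, Bool.not_not]

end BonyAux

namespace BonyAux

variable {N : ℕ} (part : Fin N → Bool)

lemma measurable_acc (n : ℤ) : Measurable (fun ξ : BSeq N => acc part ξ n) := by
  have hP : ∀ k : ℕ, Measurable (fun ξ : BSeq N => accP part ξ k) := by
    intro k
    induction k with
    | zero => exact measurable_const
    | succ k ih =>
        have : (fun ξ : BSeq N => accP part ξ (k+1))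
            = (fun q : Bool × Bool => xor q.1 q.2) ∘
              (fun ξ => (accP part ξ k, !(part (ξ (k : ℤ))))) := rfl
        rw [this]
        exact Measurable.of_discrete.comp
          (ih.prodMk ((Measurable.of_discrete (f := fun i : Fin N => !(part i))).comp
            (measurable_pi_apply _)))
  have hN : ∀ k : ℕ, Measurable (fun ξ : BSeq N => accN part ξ k) := by
    intro k
    induction k with
    | zero => exact measurable_const
    | succ k ih =>
        have : (fun ξ : BSeq N => accN part ξ (k+1))
            = (fun q : Bool × Bool => xor q.1 q.2) ∘
              (fun ξ => (accN part ξ k, !(part (ξ (Int.negSucc k))))) := rfl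
        rw [this]
        exact Measurable.of_discrete.comp
          (ih.prodMk ((Measurable.of_discrete (f := fun i : Fin N => !(part i))).comp
            (measurable_pi_apply _)))
  cases n with
  | ofNat k => exact hP k
  | negSucc k => exact hN (k+1)

lemma measurable_liftSeq (b : Bool) : Measurable (liftSeq part b) := by
  apply Measurable.subtype_mk
  apply measurable_pi_iff.2
  intro n
  exact (measurable_pi_apply n).prodMk
    ((Measurable.of_discrete (f := fun c : Bool => xor b c)).comp (measurable_acc part n))

lemma measurable_piA : Measurable (piA (N := N) (part := part)) := by
  apply measurable_pi_iff.2
  intro n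
  exact ((Measurable.of_discrete (f := fun s : DSym N => s.1)).comp
    (measurable_pi_apply (X := fun _ : ℤ => DSym N) n)).comp measurable_subtype_coe

lemma measurable_mirrorA : Measurable (mirrorA (N := N) (part := part)) := by
  apply Measurable.subtype_mk
  apply measurable_pi_iff.2
  intro n
  exact (Measurable.of_discrete (f := fun s : DSym N => (s.1, !s.2))).comp
    ((measurable_pi_apply (X := fun _ : ℤ => DSym N) n).comp measurable_subtype_coe)

lemma continuous_acc (n : ℤ) : Continuous (fun ξ : BSeq N => acc part ξ n) := by
  have hP : ∀ k : ℕ, Continuous (fun ξ : BSeq N => accP part ξ k) := by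
    intro k
    induction k with
    | zero => exact continuous_const
    | succ k ih =>
        have : (fun ξ : BSeq N => accP part ξ (k+1))
            = (fun q : Bool × Bool => xor q.1 q.2) ∘
              (fun ξ => (accP part ξ k, !(part (ξ (k : ℤ))))) := rfl
        rw [this]
        exact continuous_of_discreteTopology.comp
          (ih.prodMk ((continuous_of_discreteTopology (f := fun i : Fin N => !(part i))).comp
            (continuous_apply _)))
  have hN : ∀ k : ℕ, Continuous (fun ξ : BSeq N => accN part ξ k) := by
    intro k
    induction k with
    | zero => exact continuous_const
    | succ k ih =>
        have : (fun ξ : BSeq N => accN part ξ (k+1))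
            = (fun q : Bool × Bool => xor q.1 q.2) ∘
              (fun ξ => (accN part ξ k, !(part (ξ (Int.negSucc k))))) := rfl
        rw [this]
        exact continuous_of_discreteTopology.comp
          (ih.prodMk ((continuous_of_discreteTopology (f := fun i : Fin N => !(part i))).comp
            (continuous_apply _)))
  cases n with
  | ofNat k => exact hP k
  | negSucc k => exact hN (k+1)

lemma continuous_liftSeq (b : Bool) : Continuous (liftSeq part b) := by
  apply Continuous.subtype_mk
  apply continuous_pi
  intro n
  exact (continuous_apply n).prodMk
    ((continuous_of_discreteTopology (f := fun c : Bool => xor b c)).comp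
      (continuous_acc part n))

end BonyAux


namespace BonyAux

variable {N : ℕ} (part : Fin N → Bool)

lemma measurableSet_cylinder (m : ℤ) (k : ℕ) (w : ℕ → DSym N) :
    MeasurableSet (_root_.cylinder m k w) := by
  have : _root_.cylinder m k w = ⋂ (i : ℕ) (_ : i ≤ k), {η : ℤ → DSym N | η (m + i) = w i} := by
    ext η; simp [_root_.cylinder]
  rw [this]
  refine MeasurableSet.iInter fun i => MeasurableSet.iInter fun _ => ?_
  exact (measurable_pi_apply (X := fun _ : ℤ => DSym N) ((m + i : ℤ))) (MeasurableSet.singleton (w i))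

/-- A block-singleton cylinder is a `_root_.cylinder`. -/
lemma cylinder_singleton_eq_block (hN : N ≠ 0) (m : ℤ) (k : ℕ)
    (v : ∀ _ : (Finset.Icc m (m + (k : ℤ)) : Finset ℤ), DSym N) :
    MeasureTheory.cylinder (α := fun _ : ℤ => DSym N) (Finset.Icc m (m + (k : ℤ)))
      ({v} : Set (∀ _ : (Finset.Icc m (m + (k : ℤ)) : Finset ℤ), DSym N)) =
      _root_.cylinder m k (fun i =>
        if h : (i : ℕ) ≤ k then v ⟨m + (i : ℤ), by simp [Finset.mem_Icc]; omega⟩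
        else ((⟨0, Nat.pos_of_ne_zero hN⟩ : Fin N), false)) := by
  ext η
  simp only [MeasureTheory.mem_cylinder, Set.mem_singleton_iff, _root_.cylinder, Set.mem_setOf_eq]
  constructor
  · intro h i hi
    rw [dif_pos hi]
    have := congrFun h ⟨m + (i : ℤ), by simp [Finset.mem_Icc]; omega⟩
    exact this
  · intro h
    funext j
    obtain ⟨j, hj⟩ := j
    rw [Finset.mem_Icc] at hj
    have hi : ((j - m).toNat : ℤ) = j - m := Int.toNat_of_nonneg (by omega)
    have h1 : (j - m).toNat ≤ k := by omega
    have := h (j - m).toNat h1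
    rw [dif_pos h1] at this
    have he : m + ((j - m).toNat : ℤ) = j := by omega
    calc η j = η (m + ((j - m).toNat : ℤ)) := by rw [he]
      _ = v ⟨m + ((j - m).toNat : ℤ), by simp [Finset.mem_Icc]; omega⟩ := this
      _ = v ⟨j, by rw [Finset.mem_Icc]; omega⟩ := congrArg v (Subtype.ext he)

end BonyAux

open scoped ENNReal

namespace BonyAux

variable {N : ℕ} (part : Fin N → Bool)

/-- Two probability measures agreeing on all block cylinders are equal. -/
lemma ext_of_blocks (hN : N ≠ 0) (ν₁ ν₂ : Measure (ℤ → DSym N))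
    [IsProbabilityMeasure ν₁] [IsProbabilityMeasure ν₂]
    (h : ∀ (m : ℤ) (k : ℕ) (w : ℕ → DSym N), ν₁ (_root_.cylinder m k w) = ν₂ (_root_.cylinder m k w)) :
    ν₁ = ν₂ := by
  refine ext_of_generate_finite (measurableCylinders (fun _ : ℤ => DSym N))
    generateFrom_measurableCylinders.symm isPiSystem_measurableCylinders ?_ (by simp)
  intro s hs
  obtain ⟨t, S, hS, rfl⟩ := (mem_measurableCylinders _).1 hs
  classical
  set n : ℕ := t.sup (fun i => i.natAbs) with hn
  set m : ℤ := -(n : ℤ) with hm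
  set k : ℕ := 2 * n with hk
  set u : Finset ℤ := Finset.Icc m (m + (k : ℤ)) with hu
  have hsub : t ⊆ u := by
    intro i hi
    have h1 : i.natAbs ≤ n := Finset.le_sup (f := fun i : ℤ => i.natAbs) hi
    simp only [hu, Finset.mem_Icc, hm, hk]
    omega
  set T : Set (∀ _ : u, DSym N) :=
    {v | Finset.restrict₂ (π := fun _ : ℤ => DSym N) hsub v ∈ S} with hT
  have hdecomp : MeasureTheory.cylinder t S
      = ⋃ v ∈ T, MeasureTheory.cylinder (α := fun _ : ℤ => DSym N) u
          ({v} : Set (∀ _ : u, DSym N)) := by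
    ext η
    simp only [MeasureTheory.mem_cylinder, Set.mem_iUnion, Set.mem_singleton_iff]
    constructor
    · intro hη
      exact ⟨u.restrict η, hη, rfl⟩
    · rintro ⟨v, hv, hηv⟩
      have : Finset.restrict₂ (π := fun _ : ℤ => DSym N) hsub v = t.restrict η := by
        rw [← hηv]; rfl
      rw [← this]; exact hv
  have hfinT : T.Finite := Set.toFinite T
  have hmeas : ∀ v : (∀ _ : u, DSym N),
      MeasurableSet (MeasureTheory.cylinder (α := fun _ : ℤ => DSym N) u
        ({v} : Set (∀ _ : u, DSym N))) :=
    fun v => MeasurableSet.cylinder u (MeasurableSet.of_discrete)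
  have hdisj : (hfinT.toFinset : Set (∀ _ : u, DSym N)).PairwiseDisjoint
      (fun v => MeasureTheory.cylinder (α := fun _ : ℤ => DSym N) u
        ({v} : Set (∀ _ : u, DSym N))) := by
    intro v _ v' _ hne
    refine Set.disjoint_left.2 fun η h1 h2 => hne ?_
    rw [MeasureTheory.mem_cylinder, Set.mem_singleton_iff] at h1 h2
    rw [← h1, ← h2]
  have hsum : ∀ ν : Measure (ℤ → DSym N),
      ν (MeasureTheory.cylinder t S)
        = ∑ v ∈ hfinT.toFinset, ν (MeasureTheory.cylinder (α := fun _ : ℤ => DSym N) u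
            ({v} : Set (∀ _ : u, DSym N))) := by
    intro ν
    rw [hdecomp]
    have : (⋃ v ∈ T, MeasureTheory.cylinder (α := fun _ : ℤ => DSym N) u
        ({v} : Set (∀ _ : u, DSym N)))
        = ⋃ v ∈ hfinT.toFinset, MeasureTheory.cylinder (α := fun _ : ℤ => DSym N) u
            ({v} : Set (∀ _ : u, DSym N)) := by
      simp only [Set.Finite.mem_toFinset]
    rw [this, measure_biUnion_finset hdisj (fun v _ => hmeas v)]
  rw [hsum ν₁, hsum ν₂]
  refine Finset.sum_congr rfl fun v _ => ?_
  rw [cylinder_singleton_eq_block hN m k v, h]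

/-- The mirror involution on the full doubled-sequence space. -/
def dblM : (ℤ → DSym N) → (ℤ → DSym N) := fun ω n => ((ω n).1, !(ω n).2)

lemma measurable_dblM : Measurable (dblM (N := N)) := by
  apply measurable_pi_iff.2
  intro n
  exact (Measurable.of_discrete (f := fun s : DSym N => (s.1, !s.2))).comp
    (measurable_pi_apply (X := fun _ : ℤ => DSym N) n)

lemma dblM_preimage__root_.cylinder (m : ℤ) (k : ℕ) (w : ℕ → DSym N) :
    dblM (N := N) ⁻¹' _root_.cylinder m k w = _root_.cylinder m k (fun i => ((w i).1, !(w i).2)) := by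
  have key : ∀ a b : DSym N, ((a.1, !a.2) = b ↔ a = (b.1, !b.2)) := by
    rintro ⟨a1, a2⟩ ⟨b1, b2⟩
    cases a2 <;> cases b2 <;> simp [Prod.ext_iff]
  ext η
  simp only [Set.mem_preimage, _root_.cylinder, Set.mem_setOf_eq, dblM]
  exact forall₂_congr fun i hi => key _ _

lemma measurableSet_admissible :
    MeasurableSet {ω : ℤ → DSym N | Admissible part ω} := by
  have : {ω : ℤ → DSym N | Admissible part ω}
      = ⋂ n : ℤ, (fun ω : ℤ → DSym N =>
          ((ω (n+1)).2, xor ((ω n).2) (!(part (ω n).1)))) ⁻¹' {q : Bool × Bool | q.1 = q.2} := by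
    ext ω; simp [Admissible]
  rw [this]
  refine MeasurableSet.iInter fun n => ?_
  exact (((Measurable.of_discrete (f := fun s : DSym N => s.2)).comp
      (measurable_pi_apply (X := fun _ : ℤ => DSym N) (n+1))).prodMk
    ((Measurable.of_discrete (f := fun s : DSym N => xor s.2 (!(part s.1)))).comp
      (measurable_pi_apply (X := fun _ : ℤ => DSym N) n))) MeasurableSet.of_discrete

/-- Invariance of the symmetric Markov measure under the mirror involution. -/
lemma lam_map_mirror (hN : N ≠ 0)
    (lam : Measure (SigmaA N part)) [IsProbabilityMeasure lam]
    (p : DSym N → ℝ≥0∞) (P : DSym N → DSym N → ℝ≥0∞)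
    (hMarkov : ∀ (m : ℤ) (k : ℕ) (w : ℕ → DSym N),
      (lam.map (Subtype.val)) (_root_.cylinder m k w)
        = p (w 0) * ∏ i ∈ Finset.range k, P (w i) (w (i + 1)))
    (hsym : (∀ s : DSym N, p s = p (s.1, !s.2)) ∧
      (∀ s t : DSym N, P s t = P (s.1, !s.2) (t.1, !t.2))) :
    lam.map (mirrorA (part := part)) = lam := by
  have hval : Measurable (Subtype.val : SigmaA N part → ℤ → DSym N) := measurable_subtype_coe
  have hM := measurable_dblM (N := N)
  have hmir := measurable_mirrorA (part := part)
  have hemb := MeasurableEmbedding.subtype_coe (measurableSet_admissible part)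
  set μ := lam.map (Subtype.val : SigmaA N part → ℤ → DSym N) with hμdef
  have hμ : IsProbabilityMeasure μ := Measure.isProbabilityMeasure_map hval.aemeasurable
  have hμM : IsProbabilityMeasure (μ.map (dblM (N := N))) :=
    Measure.isProbabilityMeasure_map hM.aemeasurable
  have key : μ.map (dblM (N := N)) = μ := by
    apply ext_of_blocks hN
    intro m k w
    rw [Measure.map_apply hM (measurableSet_cylinder m k w), dblM_preimage__root_.cylinder,
      hMarkov, hMarkov]
    rw [← hsym.1 (w 0)]
    refine congrArg _ (Finset.prod_congr rfl fun i _ => (hsym.2 (w i) (w (i+1))).symm)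
  have h2 : (lam.map (mirrorA (part := part))).map (Subtype.val : SigmaA N part → ℤ → DSym N)
      = μ := by
    rw [Measure.map_map hval hmir]
    have he : ((Subtype.val : SigmaA N part → ℤ → DSym N) ∘ mirrorA)
        = dblM (N := N) ∘ (Subtype.val : SigmaA N part → ℤ → DSym N) := rfl
    rw [he, ← Measure.map_map hM hval]
    exact key
  ext S hS
  calc (lam.map (mirrorA (part := part))) S
      = (lam.map (mirrorA (part := part))) (Subtype.val ⁻¹' (Subtype.val '' S)) := by
        rw [Set.preimage_image_eq _ Subtype.val_injective]
    _ = ((lam.map (mirrorA (part := part))).map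
          (Subtype.val : SigmaA N part → ℤ → DSym N)) (Subtype.val '' S) :=
        (hemb.map_apply _ _).symm
    _ = μ (Subtype.val '' S) := by rw [h2]
    _ = lam (Subtype.val ⁻¹' (Subtype.val '' S)) := hemb.map_apply _ _
    _ = lam S := by rw [Set.preimage_image_eq _ Subtype.val_injective]

end BonyAux


namespace BonyAux

variable {N : ℕ} (part : Fin N → Bool)

lemma slice_false (B : Set (SigmaA N part × ℝ)) (ξ : BSeq N) :
    fslice (PiMap (N := N) (part := part) '' (B ∩ {z | (z.1.1 0).2 = false})) ξ
      = fslice B (liftSeq part false ξ) := by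
  ext x
  constructor
  · rintro ⟨⟨ω, y⟩, ⟨hzB, hbit⟩, hz⟩
    simp only [Set.mem_setOf_eq] at hbit
    simp only [PiMap, hbit, if_false, Prod.mk.injEq] at hz
    obtain ⟨hξ, hx⟩ := hz
    have hω : liftSeq part false (piA (⟨ω.1, ω.2⟩ : SigmaA N part)) = ω := liftSeq_eq_self part hbit
    rw [← hξ, ← hx]
    show (liftSeq part false (piA ω), y) ∈ B
    rw [hω]
    exact hzB
  · intro hx
    refine ⟨(liftSeq part false ξ, x), ⟨hx, liftSeq_bit0 part false ξ⟩, ?_⟩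
    simp [PiMap, liftSeq_bit0, piA_liftSeq]

lemma slice_true (B : Set (SigmaA N part × ℝ)) (ξ : BSeq N) :
    fslice (PiMap (N := N) (part := part) '' (B ∩ {z | (z.1.1 0).2 = true})) ξ
      = (fun y : ℝ => 1 - y) '' fslice B (liftSeq part true ξ) := by
  ext x
  constructor
  · rintro ⟨⟨ω, y⟩, ⟨hzB, hbit⟩, hz⟩
    simp only [Set.mem_setOf_eq] at hbit
    simp only [PiMap, hbit, if_true, Prod.mk.injEq] at hz
    obtain ⟨hξ, hx⟩ := hz
    have hω : liftSeq part true (piA ω) = ω := liftSeq_eq_self part hbit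
    refine ⟨y, ?_, hx⟩
    show (liftSeq part true ξ, y) ∈ B
    rw [← hξ, hω]
    exact hzB
  · rintro ⟨y, hy, rfl⟩
    refine ⟨(liftSeq part true ξ, y), ⟨hy, liftSeq_bit0 part true ξ⟩, ?_⟩
    simp [PiMap, liftSeq_bit0, piA_liftSeq, R]

lemma ordConnected_reflect {S : Set ℝ} (h : S.OrdConnected) :
    ((fun y : ℝ => 1 - y) '' S).OrdConnected := by
  constructor
  rintro a ⟨u, hu, rfl⟩ b ⟨v, hv, rfl⟩ c hc
  obtain ⟨hc1, hc2⟩ := hc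
  have hc1' : 1 - u ≤ c := hc1
  have hc2' : c ≤ 1 - v := hc2
  refine ⟨1 - c, h.out hv hu ⟨by linarith, by linarith⟩, by ring⟩

lemma exists_singleton_reflect {S : Set ℝ} :
    (∃ x, (fun y : ℝ => 1 - y) '' S = {x}) ↔ ∃ x, S = {x} := by
  constructor
  · rintro ⟨x, hx⟩
    refine ⟨1 - x, ?_⟩
    have h2 : (fun y : ℝ => 1 - y) '' ((fun y : ℝ => 1 - y) '' S)
        = (fun y : ℝ => 1 - y) '' {x} := by rw [hx]
    rwa [Set.image_image, Set.image_singleton,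
      show (fun y : ℝ => 1 - (1 - y)) = fun y : ℝ => y from funext fun y => by ring,
      Set.image_id'] at h2
  · rintro ⟨x, rfl⟩
    exact ⟨1 - x, Set.image_singleton⟩

/-- The bad set of a lifted slice family is null under the projected measure. -/
lemma bad_null (hN : N ≠ 0) (lam : Measure (SigmaA N part)) [IsProbabilityMeasure lam]
    (hmir : lam.map (mirrorA (part := part)) = lam)
    (B : Set (SigmaA N part × ℝ))
    (hB : lam {ω | ¬ ∃ x : ℝ, fslice B ω = {x}} = 0) (b : Bool) :
    (lam.map (piA (N := N) (part := part)))
      {ξ | ¬ ∃ x : ℝ, fslice B (liftSeq part b ξ) = {x}} = 0 := by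
  obtain ⟨T₀, hsub0, hT₀meas, hT₀null⟩ := exists_measurable_superset_of_null hB
  have hle1 : {ξ | ¬ ∃ x : ℝ, fslice B (liftSeq part b ξ) = {x}}
      ⊆ liftSeq part b ⁻¹' T₀ := fun ξ hξ => hsub0 hξ
  refine le_antisymm ?_ zero_le
  calc (lam.map (piA (N := N) (part := part)))
        {ξ | ¬ ∃ x : ℝ, fslice B (liftSeq part b ξ) = {x}}
      ≤ (lam.map (piA (N := N) (part := part))) (liftSeq part b ⁻¹' T₀) :=
        measure_mono hle1
    _ = lam (piA ⁻¹' (liftSeq part b ⁻¹' T₀)) :=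
        Measure.map_apply (measurable_piA part) ((measurable_liftSeq part b) hT₀meas)
    _ ≤ lam (T₀ ∪ mirrorA ⁻¹' T₀) := by
        refine measure_mono fun ω hω => ?_
        simp only [Set.mem_preimage] at hω
        by_cases hb : (ω.1 0).2 = b
        · left
          rwa [liftSeq_eq_self part hb] at hω
        · right
          have hb' : (ω.1 0).2 = !b := by
            cases hω0 : (ω.1 0).2 <;> cases b <;> simp_all
          rwa [liftSeq_eq_mirror part hb'] at hω
    _ ≤ lam T₀ + lam (mirrorA ⁻¹' T₀) := measure_union_le _ _
    _ = 0 := by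
        have : lam (mirrorA ⁻¹' T₀) = (lam.map (mirrorA (part := part))) T₀ :=
          (Measure.map_apply (measurable_mirrorA part) hT₀meas).symm
        rw [this, hmir, hT₀null, add_zero]

end BonyAux

/-- **Lemma (projection of bony graphs).** If `B` is a (continuous) bony graph relative
to a symmetric Markov measure `lam` on `Σ_A`, then `Π(B)` is a (continuous) bi-bony
graph relative to `π_* lam`. -/
theorem bony_graph_projects {N : ℕ} (f : Fin N → ℝ → ℝ)
    (part : Fin N → Bool) (hor : OrientPart f part)
    (lam : Measure (SigmaA N part)) [IsProbabilityMeasure lam]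
    (p : DSym N → ℝ≥0∞) (P : DSym N → DSym N → ℝ≥0∞)
    (hMarkov : IsMarkov (lam.map (Subtype.val)) p P)
    (hstoch : IsStochastic p P) (hcompat : CompatA part P) (hsym : SymMarkov p P)
    (B : Set (SigmaA N part × ℝ))
    (hB : IsBony lam B) :
    IsBony (lam.map (piA (N := N) (part := part)))
        (PiMap (N := N) (part := part) '' (B ∩ {z | (z.1.1 0).2 = false})) ∧
    IsBony (lam.map (piA (N := N) (part := part)))
        (PiMap (N := N) (part := part) '' (B ∩ {z | (z.1.1 0).2 = true})) ∧
    PiMap (N := N) (part := part) '' B =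
      PiMap (N := N) (part := part) '' (B ∩ {z | (z.1.1 0).2 = false}) ∪
      PiMap (N := N) (part := part) '' (B ∩ {z | (z.1.1 0).2 = true}) ∧
    (ContBony B → ContBony (PiMap (N := N) (part := part) '' B)) := by
  classical
  rcases eq_or_ne N 0 with hN0 | hN
  · exfalso
    subst hN0
    have huniv : (Set.univ : Set (SigmaA 0 part)) = ∅ :=
      Set.eq_empty_of_forall_notMem fun ω _ => Fin.elim0 ((ω.1 0).1)
    have h1 : lam Set.univ = 1 := measure_univ
    rw [huniv, measure_empty] at h1
    exact zero_ne_one h1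
  have hmir : lam.map (mirrorA (part := part)) = lam :=
    BonyAux.lam_map_mirror part hN lam p P (fun m k w => hMarkov m k w) ⟨hsym.1, hsym.2⟩
  refine ⟨⟨?_, ?_⟩, ⟨?_, ?_⟩, ?_, ?_⟩
  · intro ξ
    rw [BonyAux.slice_false part B ξ]
    exact hB.1 _
  · have he : {ξ | ¬ ∃ x : ℝ,
        fslice (PiMap (N := N) (part := part) '' (B ∩ {z | (z.1.1 0).2 = false})) ξ = {x}}
        = {ξ | ¬ ∃ x : ℝ, fslice B (BonyAux.liftSeq part false ξ) = {x}} := by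
      ext ξ
      simp only [Set.mem_setOf_eq]
      rw [BonyAux.slice_false part B ξ]
    rw [he]
    exact BonyAux.bad_null part hN lam hmir B hB.2 false
  · intro ξ
    rw [BonyAux.slice_true part B ξ]
    exact ⟨(hB.1 _).1.image _, BonyAux.ordConnected_reflect (hB.1 _).2⟩
  · have he : {ξ | ¬ ∃ x : ℝ,
        fslice (PiMap (N := N) (part := part) '' (B ∩ {z | (z.1.1 0).2 = true})) ξ = {x}}
        = {ξ | ¬ ∃ x : ℝ, fslice B (BonyAux.liftSeq part true ξ) = {x}} := by
      ext ξ
      simp only [Set.mem_setOf_eq]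
      rw [BonyAux.slice_true part B ξ]
      rw [BonyAux.exists_singleton_reflect]
    rw [he]
    exact BonyAux.bad_null part hN lam hmir B hB.2 true
  · rw [← Set.image_union, ← Set.inter_union_distrib_left]
    have huniv : ({z : SigmaA N part × ℝ | (z.1.1 0).2 = false}
        ∪ {z | (z.1.1 0).2 = true}) = Set.univ := by
      ext z
      simp only [Set.mem_union, Set.mem_setOf_eq, Set.mem_univ, iff_true]
      cases (z.1.1 0).2
      · exact Or.inl rfl
      · exact Or.inr rfl
    rw [huniv, Set.inter_univ]
  · intro hcont ξ ε hε
    obtain ⟨U₀, hU₀n, hU₀⟩ := hcont (BonyAux.liftSeq part false ξ) ε hε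
    obtain ⟨U₁, hU₁n, hU₁⟩ := hcont (BonyAux.liftSeq part true ξ) ε hε
    refine ⟨(BonyAux.liftSeq part false) ⁻¹' U₀ ∩ (BonyAux.liftSeq part true) ⁻¹' U₁,
      Filter.inter_mem
        ((BonyAux.continuous_liftSeq part false).continuousAt.preimage_mem_nhds hU₀n)
        ((BonyAux.continuous_liftSeq part true).continuousAt.preimage_mem_nhds hU₁n), ?_⟩
    rintro η ⟨hη₀, hη₁⟩ y hy
    obtain ⟨⟨ω, x⟩, hzB, hz⟩ := hy
    cases hb : (ω.1 0).2 with
    | false =>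
        simp only [PiMap, hb, Bool.false_eq_true, if_false, Prod.mk.injEq] at hz
        obtain ⟨hξη, hxy⟩ := hz
        have hω : BonyAux.liftSeq part false η = ω := by
          rw [← hξη]
          exact BonyAux.liftSeq_eq_self part hb
        have hxslice : x ∈ fslice B (BonyAux.liftSeq part false η) := by
          show (BonyAux.liftSeq part false η, x) ∈ B
          rw [hω]; exact hzB
        obtain ⟨x', hx', hlt⟩ := hU₀ _ hη₀ x hxslice
        refine ⟨x', ⟨(BonyAux.liftSeq part false ξ, x'), hx', ?_⟩, ?_⟩
        · simp [PiMap, BonyAux.liftSeq_bit0]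
        · rw [← hxy]; exact hlt
    | true =>
        simp only [PiMap, hb, if_true, Prod.mk.injEq] at hz
        obtain ⟨hξη, hxy⟩ := hz
        have hω : BonyAux.liftSeq part true η = ω := by
          rw [← hξη]
          exact BonyAux.liftSeq_eq_self part hb
        have hxslice : x ∈ fslice B (BonyAux.liftSeq part true η) := by
          show (BonyAux.liftSeq part true η, x) ∈ B
          rw [hω]; exact hzB
        obtain ⟨x', hx', hlt⟩ := hU₁ _ hη₁ x hxslice
        refine ⟨1 - x', ⟨(BonyAux.liftSeq part true ξ, x'), hx', ?_⟩, ?_⟩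
        · simp [PiMap, BonyAux.liftSeq_bit0, R]
        · rw [← hxy]
          have : R x - (1 - x') = x' - x := by simp only [R]; ring
          rw [this, abs_sub_comm]
          exact hlt
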